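/- Let X and A be nonempty finite sets, let P : X × A → (X → ℝ) be a transition kernel (P(x'|x,a) ≥ 0 and Σ_{x'} P(x'|x,a) = 1), and let r : X × A → ℝ with 0 ≤ r(x,a) ≤ 1. Let π and π' be policies with induced transition matrices P^π, P^{π'} and induced rewards r_π, r_{π'} (where P^π(x,x') = Σ_a π(a|x)·P(x'|x,a) and r_π(x) = Σ_a π(a|x)·r(x,a)). Let τ ≥ 1 and suppose both P^π and P^{π'} satisfy the contraction condition: for any two probability distributions μ, μ' on X, the ℓ1-distance between μP^π and μ'P^π (respectively μP^{π'} and μ'P^{π'}) is at most exp(−1/τ) times the ℓ1-distance between μ and μ'. Let μ_π and μ_{π'} be stationary distributions of P^π and P^{π'} respectively, set λ_π = Σ_x μ_π(x)·r_π(x) and λ_{π'} = Σ_x μ_{π'}(x)·r_{π'}(x), and define V_π(x) = Σ_{t=0}^∞ (((P^π)^t r_π)(x) − λ_π) and V_{π'}(x) = Σ_{t=0}^∞ (((P^{π'})^t r_{π'})(x) − λ_{π'}) (both series converge absolutely under the contraction condition). Let K be an integer with K ≥ 6τ, set N = ⌈4τ·log₂ K⌉ and Δ = max_{x∈X} Σ_{a∈A}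 |π(a|x) − π'(a|x)|. Then for every x ∈ X: |V_π(x) − V_{π'}(x)| ≤ (N² + N)·Δ + N·|λ_π − λ_{π'}| + 2/K³. -/

import Mathlib

open Finset Matrix




section helpers
variable {X : Type*} [Fintype X] [DecidableEq X]

lemma pow_stoch (M : Matrix X X ℝ) (h0 : ∀ x x', 0 ≤ M x x')
    (h1 : ∀ x, ∑ x', M x x' = 1) (t : ℕ) :
    (∀ x x', 0 ≤ (M ^ t) x x') ∧ (∀ x, ∑ x', (M ^ t) x x' = 1) := by
  induction t with
  | zero =>
    refine ⟨fun x x' => ?_, fun x => ?_⟩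
    · simp only [pow_zero, Matrix.one_apply]
      split <;> norm_num
    · simp [pow_zero, Matrix.one_apply]
  | succ t ih =>
    obtain ⟨ih0, ih1⟩ := ih
    refine ⟨fun x x' => ?_, fun x => ?_⟩
    · rw [pow_succ', Matrix.mul_apply]
      exact Finset.sum_nonneg fun y _ => mul_nonneg (h0 x y) (ih0 y x')
    · rw [pow_succ']
      simp only [Matrix.mul_apply]
      rw [Finset.sum_comm]
      calc ∑ y, ∑ x', M x y * (M ^ t) y x'
          = ∑ y, M x y * ∑ x', (M ^ t) y x' := by
            simp [Finset.mul_sum]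
        _ = 1 := by simp [ih1, h1]

lemma pow_mulVec_mem (M : Matrix X X ℝ) (h0 : ∀ x x', 0 ≤ M x x')
    (h1 : ∀ x, ∑ x', M x x' = 1) (v : X → ℝ) (hv0 : ∀ x, 0 ≤ v x)
    (hv1 : ∀ x, v x ≤ 1) (t : ℕ) (x : X) :
    0 ≤ (M ^ t).mulVec v x ∧ (M ^ t).mulVec v x ≤ 1 := by
  obtain ⟨p0, p1⟩ := pow_stoch M h0 h1 t
  constructor
  · exact Finset.sum_nonneg fun y _ => mul_nonneg (p0 x y) (hv0 y)
  · calc (M ^ t).mulVec v x = ∑ y, (M ^ t) x y * v y := rfl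
      _ ≤ ∑ y, (M ^ t) x y * 1 := by
          exact Finset.sum_le_sum fun y _ => mul_le_mul_of_nonneg_left (hv1 y) (p0 x y)
      _ = 1 := by simp [p1 x]

end helpers



section h2
variable {X : Type*} [Fintype X] [DecidableEq X]

/-- iterated contraction -/
lemma mix_pow (M : Matrix X X ℝ) (h0 : ∀ x x', 0 ≤ M x x')
    (h1 : ∀ x, ∑ x', M x x' = 1) (q : ℝ) (hq : 0 ≤ q)
    (hc : ∀ μ μ' : X → ℝ, (∀ x, 0 ≤ μ x) → (∑ x, μ x = 1) →
      (∀ x, 0 ≤ μ' x) → (∑ x, μ' x = 1) →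
      ∑ x', |∑ x, (μ x - μ' x) * M x x'| ≤ q * ∑ x, |μ x - μ' x|) :
    ∀ t : ℕ, ∀ μ μ' : X → ℝ, (∀ x, 0 ≤ μ x) → (∑ x, μ x = 1) →
      (∀ x, 0 ≤ μ' x) → (∑ x, μ' x = 1) →
      ∑ x', |∑ x, (μ x - μ' x) * (M ^ t) x x'| ≤ q ^ t * ∑ x, |μ x - μ' x| := by
  intro t
  induction t with
  | zero =>
    intro μ μ' hμ0 hμ1 hμ'0 hμ'1
    simp only [pow_zero, Matrix.one_apply]
    have : ∀ x' : X, ∑ x, (μ x - μ' x) * (if x = x' then (1:ℝ) else 0) = μ x' - μ' x' := by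
      intro x'
      rw [Finset.sum_eq_single x']
      · simp
      · intro b _ hb; simp [hb]
      · simp
    simp only [this, one_mul]
    exact le_refl _
  | succ t ih =>
    intro μ μ' hμ0 hμ1 hμ'0 hμ'1
    set ν : X → ℝ := fun y => ∑ x, μ x * M x y with hν
    set ν' : X → ℝ := fun y => ∑ x, μ' x * M x y with hν'
    have hν0 : ∀ y, 0 ≤ ν y := fun y =>
      Finset.sum_nonneg fun x _ => mul_nonneg (hμ0 x) (h0 x y)
    have hν1 : ∑ y, ν y = 1 := by
      rw [Finset.sum_comm]
      calc ∑ x, ∑ y, μ x * M x y = ∑ x, μ x * ∑ y, M x y := by simp [Finset.mul_sum]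
        _ = 1 := by simp [h1, hμ1]
    have hν'0 : ∀ y, 0 ≤ ν' y := fun y =>
      Finset.sum_nonneg fun x _ => mul_nonneg (hμ'0 x) (h0 x y)
    have hν'1 : ∑ y, ν' y = 1 := by
      rw [Finset.sum_comm]
      calc ∑ x, ∑ y, μ' x * M x y = ∑ x, μ' x * ∑ y, M x y := by simp [Finset.mul_sum]
        _ = 1 := by simp [h1, hμ'1]
    have key : ∀ x', ∑ x, (μ x - μ' x) * (M ^ (t+1)) x x'
        = ∑ y, (ν y - ν' y) * (M ^ t) y x' := by
      intro x'
      rw [pow_succ']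
      simp only [Matrix.mul_apply, Finset.mul_sum]
      rw [Finset.sum_comm]
      congr 1
      ext y
      simp only [sub_mul, Finset.sum_sub_distrib, hν, hν', Finset.sum_mul]
      congr 1 <;> exact Finset.sum_congr rfl fun _ _ => by ring
    calc ∑ x', |∑ x, (μ x - μ' x) * (M ^ (t+1)) x x'|
        = ∑ x', |∑ y, (ν y - ν' y) * (M ^ t) y x'| := by simp only [key]
      _ ≤ q ^ t * ∑ y, |ν y - ν' y| := ih ν ν' hν0 hν1 hν'0 hν'1
      _ ≤ q ^ t * (q * ∑ x, |μ x - μ' x|) := by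
          refine mul_le_mul_of_nonneg_left ?_ (pow_nonneg hq t)
          have hsub : ∀ y, ν y - ν' y = ∑ x, (μ x - μ' x) * M x y := by
            intro y
            simp [hν, hν', sub_mul, Finset.sum_sub_distrib]
          calc ∑ y, |ν y - ν' y| = ∑ y, |∑ x, (μ x - μ' x) * M x y| := by
                simp only [hsub]
            _ ≤ q * ∑ x, |μ x - μ' x| := hc μ μ' hμ0 hμ1 hμ'0 hμ'1
      _ = q ^ (t+1) * ∑ x, |μ x - μ' x| := by ring

end h2



section h3
variable {X : Type*} [Fintype X] [DecidableEq X]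

lemma val_diff (M M' : Matrix X X ℝ)
    (hM0 : ∀ x x', 0 ≤ M x x') (hM1 : ∀ x, ∑ x', M x x' = 1)
    (hM'0 : ∀ x x', 0 ≤ M' x x') (hM'1 : ∀ x, ∑ x', M' x x' = 1)
    (v v' : X → ℝ) (hv0 : ∀ x, 0 ≤ v x) (hv1 : ∀ x, v x ≤ 1)
    (hv'0 : ∀ x, 0 ≤ v' x) (hv'1 : ∀ x, v' x ≤ 1) (Δ : ℝ)
    (hrow : ∀ x, ∑ x', |M x x' - M' x x'| ≤ Δ) (hvd : ∀ x, |v x - v' x| ≤ Δ) :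
    ∀ (t : ℕ) (x : X), |(M ^ t).mulVec v x - (M' ^ t).mulVec v' x| ≤ ((t : ℝ) + 1) * Δ := by
  intro t
  induction t with
  | zero => intro x; simpa using hvd x
  | succ t ih =>
    intro x
    have hmem := fun y => pow_mulVec_mem M' hM'0 hM'1 v' hv'0 hv'1 t y
    have e1 : (M ^ (t+1)).mulVec v x = M.mulVec ((M ^ t).mulVec v) x := by
      rw [pow_succ', ← Matrix.mulVec_mulVec]
    have e1' : (M' ^ (t+1)).mulVec v' x = M'.mulVec ((M' ^ t).mulVec v') x := by
      rw [pow_succ', ← Matrix.mulVec_mulVec]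
    set u : X → ℝ := (M ^ t).mulVec v with hu
    set u' : X → ℝ := (M' ^ t).mulVec v' with hu'
    have split : M.mulVec u x - M'.mulVec u' x
        = (∑ y, M x y * (u y - u' y)) + ∑ y, (M x y - M' x y) * u' y := by
      simp only [Matrix.mulVec, dotProduct, mul_sub, sub_mul,
        Finset.sum_sub_distrib]
      ring
    rw [e1, e1', split]
    have b1 : |∑ y, M x y * (u y - u' y)| ≤ ((t : ℝ) + 1) * Δ := by
      calc |∑ y, M x y * (u y - u' y)| ≤ ∑ y, |M x y * (u y - u' y)| :=
            Finset.abs_sum_le_sum_abs _ _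
        _ = ∑ y, M x y * |u y - u' y| := by
            congr 1; ext y; rw [abs_mul, abs_of_nonneg (hM0 x y)]
        _ ≤ ∑ y, M x y * (((t : ℝ) + 1) * Δ) :=
            Finset.sum_le_sum fun y _ =>
              mul_le_mul_of_nonneg_left (ih y) (hM0 x y)
        _ = ((t : ℝ) + 1) * Δ := by rw [← Finset.sum_mul, hM1 x, one_mul]
    have b2 : |∑ y, (M x y - M' x y) * u' y| ≤ Δ := by
      calc |∑ y, (M x y - M' x y) * u' y| ≤ ∑ y, |(M x y - M' x y) * u' y| :=
            Finset.abs_sum_le_sum_abs _ _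
        _ ≤ ∑ y, |M x y - M' x y| := by
            refine Finset.sum_le_sum fun y _ => ?_
            rw [abs_mul]
            have : |u' y| ≤ 1 := abs_le.mpr ⟨by linarith [(hmem y).1], (hmem y).2⟩
            calc |M x y - M' x y| * |u' y| ≤ |M x y - M' x y| * 1 :=
                  mul_le_mul_of_nonneg_left this (abs_nonneg _)
              _ = _ := mul_one _
        _ ≤ Δ := hrow x
    calc |(∑ y, M x y * (u y - u' y)) + ∑ y, (M x y - M' x y) * u' y|
        ≤ |∑ y, M x y * (u y - u' y)| + |∑ y, (M x y - M' x y) * u' y| := abs_add_le _ _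
      _ ≤ ((t : ℝ) + 1) * Δ + Δ := add_le_add b1 b2
      _ = ((t : ℝ) + 1 + 1) * Δ := by ring
      _ = (↑(t + 1) + 1 : ℝ) * Δ := by push_cast; ring

end h3



section h4
variable {X : Type*} [Fintype X] [DecidableEq X]

lemma stat_pow (M : Matrix X X ℝ) (μ : X → ℝ)
    (hstatM : ∀ x', ∑ x, μ x * M x x' = μ x') :
    ∀ (t : ℕ) (x' : X), ∑ x, μ x * (M ^ t) x x' = μ x' := by
  intro t
  induction t with
  | zero =>
    intro x'
    simp only [pow_zero, Matrix.one_apply]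
    rw [Finset.sum_eq_single x']
    · simp
    · intro b _ hb; simp [hb]
    · simp
  | succ t ih =>
    intro x'
    rw [pow_succ]
    simp only [Matrix.mul_apply, Finset.mul_sum]
    rw [Finset.sum_comm]
    calc ∑ y, ∑ x, μ x * ((M ^ t) x y * M y x')
        = ∑ y, (∑ x, μ x * (M ^ t) x y) * M y x' := by
          congr 1; ext y; rw [Finset.sum_mul]; congr 1; ext x; ring
      _ = ∑ y, μ y * M y x' := by simp only [ih]
      _ = μ x' := hstatM x'

lemma mix_abs (M : Matrix X X ℝ) (h0 : ∀ x x', 0 ≤ M x x')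
    (h1 : ∀ x, ∑ x', M x x' = 1) (q : ℝ) (hq : 0 ≤ q)
    (hc : ∀ μ μ' : X → ℝ, (∀ x, 0 ≤ μ x) → (∑ x, μ x = 1) →
      (∀ x, 0 ≤ μ' x) → (∑ x, μ' x = 1) →
      ∑ x', |∑ x, (μ x - μ' x) * M x x'| ≤ q * ∑ x, |μ x - μ' x|)
    (μ : X → ℝ) (hμnn : ∀ x, 0 ≤ μ x) (hμsum : ∑ x, μ x = 1)
    (hstatM : ∀ x', ∑ x, μ x * M x x' = μ x')
    (v : X → ℝ) (hv0 : ∀ x, 0 ≤ v x) (hv1 : ∀ x, v x ≤ 1)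
    (lam : ℝ) (hlam : lam = ∑ x, μ x * v x) :
    ∀ (t : ℕ) (x : X), |(M ^ t).mulVec v x - lam| ≤ 2 * q ^ t := by
  intro t x
  set δ : X → ℝ := Pi.single x 1 with hδ
  have hδ0 : ∀ y, 0 ≤ δ y := by
    intro y; simp only [hδ, Pi.single_apply]; split <;> norm_num
  have hδ1 : ∑ y, δ y = 1 := by simp [hδ, Pi.single_apply]
  have hδsum : ∀ x', ∑ y, δ y * (M ^ t) y x' = (M ^ t) x x' := by
    intro x'
    rw [Finset.sum_eq_single x]
    · simp [hδ, Pi.single_apply]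
    · intro b _ hb; simp [hδ, Pi.single_apply, hb]
    · simp
  have hmix := mix_pow M h0 h1 q hq hc t δ μ hδ0 hδ1 hμnn hμsum
  have hinner : ∀ x', ∑ y, (δ y - μ y) * (M ^ t) y x' = (M ^ t) x x' - μ x' := by
    intro x'
    simp only [sub_mul, Finset.sum_sub_distrib]
    rw [hδsum x', stat_pow M μ hstatM t x']
  have hl1 : ∑ y, |δ y - μ y| ≤ 2 := by
    calc ∑ y, |δ y - μ y| ≤ ∑ y, (δ y + μ y) := by
          refine Finset.sum_le_sum fun y _ => ?_
          calc |δ y - μ y| ≤ |δ y| + |μ y| := abs_sub _ _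
            _ = δ y + μ y := by rw [abs_of_nonneg (hδ0 y), abs_of_nonneg (hμnn y)]
      _ = 2 := by rw [Finset.sum_add_distrib, hδ1, hμsum]; norm_num
  have hrow : ∑ x', |(M ^ t) x x' - μ x'| ≤ 2 * q ^ t := by
    calc ∑ x', |(M ^ t) x x' - μ x'|
        = ∑ x', |∑ y, (δ y - μ y) * (M ^ t) y x'| := by simp only [hinner]
      _ ≤ q ^ t * ∑ y, |δ y - μ y| := hmix
      _ ≤ q ^ t * 2 := mul_le_mul_of_nonneg_left hl1 (pow_nonneg hq t)
      _ = 2 * q ^ t := by ring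
  have he : (M ^ t).mulVec v x - lam = ∑ x', ((M ^ t) x x' - μ x') * v x' := by
    simp only [hlam, Matrix.mulVec, dotProduct, sub_mul,
      Finset.sum_sub_distrib]
  rw [he]
  calc |∑ x', ((M ^ t) x x' - μ x') * v x'|
      ≤ ∑ x', |((M ^ t) x x' - μ x') * v x'| := Finset.abs_sum_le_sum_abs _ _
    _ ≤ ∑ x', |(M ^ t) x x' - μ x'| := by
        refine Finset.sum_le_sum fun x' _ => ?_
        rw [abs_mul]
        have : |v x'| ≤ 1 := abs_le.mpr ⟨by linarith [hv0 x'], hv1 x'⟩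
        calc |(M ^ t) x x' - μ x'| * |v x'| ≤ |(M ^ t) x x' - μ x'| * 1 :=
              mul_le_mul_of_nonneg_left this (abs_nonneg _)
          _ = _ := mul_one _
    _ ≤ 2 * q ^ t := hrow

lemma tsum_tail_bound (f : ℕ → ℝ) (q C : ℝ) (hq0 : 0 ≤ q) (hq1 : q < 1)
    (hC : 0 ≤ C) (hf : ∀ t, |f t| ≤ C * q ^ t) (N : ℕ) :
    Summable f ∧ |∑' t : ℕ, f (t + N)| ≤ C * q ^ N * (1 - q)⁻¹ := by
  have hgeo : Summable (fun t : ℕ => C * q ^ t) :=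
    (summable_geometric_of_lt_one hq0 hq1).mul_left C
  have habs : Summable (fun t : ℕ => |f t|) :=
    Summable.of_nonneg_of_le (fun t => abs_nonneg _) hf hgeo
  have hsf : Summable f := summable_abs_iff.mp habs
  refine ⟨hsf, ?_⟩
  have habs' : Summable (fun t : ℕ => |f (t + N)|) := by
    exact (summable_nat_add_iff N).mpr habs
  have hgeo' : Summable (fun t : ℕ => C * q ^ N * q ^ t) :=
    (summable_geometric_of_lt_one hq0 hq1).mul_left _
  calc |∑' t : ℕ, f (t + N)| ≤ ∑' t : ℕ, |f (t + N)| := by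
        have h := norm_tsum_le_tsum_norm (f := fun t : ℕ => f (t + N))
          (by simpa only [Real.norm_eq_abs] using habs')
        simpa only [Real.norm_eq_abs] using h
    _ ≤ ∑' t : ℕ, C * q ^ N * q ^ t := by
        refine Summable.tsum_le_tsum (fun t => ?_) habs' hgeo'
        calc |f (t + N)| ≤ C * q ^ (t + N) := hf _
          _ = C * q ^ N * q ^ t := by rw [pow_add]; ring
    _ = C * q ^ N * (1 - q)⁻¹ := by
        rw [tsum_mul_left, tsum_geometric_of_lt_one hq0 hq1]

end h4



lemma numer_bound (τ : ℝ) (hτ : 1 ≤ τ) (K N : ℕ) (hK : 6 * τ ≤ (K : ℝ))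
    (hN : N = ⌈4 * τ * Real.logb 2 (K : ℝ)⌉₊) :
    2 * (Real.exp (-1 / τ)) ^ N * (1 - Real.exp (-1 / τ))⁻¹ ≤ 1 / (K : ℝ) ^ 3 := by
  have hτ0 : (0 : ℝ) < τ := by linarith
  set q : ℝ := Real.exp (-1 / τ) with hqdef
  have hq0 : 0 < q := Real.exp_pos _
  have hq1 : q < 1 := by
    rw [hqdef, Real.exp_lt_one_iff, neg_div]
    have : 0 < 1 / τ := by positivity
    linarith
  have hK6 : (6 : ℝ) ≤ (K : ℝ) := by nlinarith
  have hK1 : (1 : ℝ) ≤ (K : ℝ) := by linarith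
  have hKpos : (0 : ℝ) < (K : ℝ) := by linarith
  -- 2/K ≤ 1 - q
  have hqe : q * Real.exp (1 / τ) = 1 := by
    rw [hqdef, ← Real.exp_add, show -1 / τ + 1 / τ = 0 by ring, Real.exp_zero]
  have hA : q * (1 / τ) ≤ 1 - q := by
    have h := Real.add_one_le_exp (1 / τ)
    nlinarith
  have hq3 : 1 / 3 ≤ q := by
    have h1 : Real.exp (-1) ≤ q := by
      rw [hqdef]
      apply Real.exp_le_exp.mpr
      rw [neg_div]
      have : 1 / τ ≤ 1 := by
        rw [div_le_one hτ0]; exact hτ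
      linarith
    have h2 : (1 : ℝ) / 3 ≤ Real.exp (-1) := by
      rw [Real.exp_neg]
      have h3 : Real.exp 1 ≤ 3 := by
        have := Real.exp_one_lt_d9
        linarith
      have h4 : (0:ℝ) < Real.exp 1 := Real.exp_pos 1
      have h5 : (Real.exp 1)⁻¹ * Real.exp 1 = 1 := inv_mul_cancel₀ (ne_of_gt h4)
      nlinarith
    linarith
  have h2K : 2 / (K : ℝ) ≤ 1 - q := by
    have h1 : 1 / (3 * τ) ≤ 1 - q := by
      calc 1 / (3 * τ) = (1/3) * (1/τ) := by ring
        _ ≤ q * (1/τ) := by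
            apply mul_le_mul_of_nonneg_right hq3 (by positivity)
        _ ≤ 1 - q := hA
    calc 2 / (K : ℝ) ≤ 2 / (6 * τ) := by
          apply div_le_div_of_nonneg_left (by norm_num) (by positivity) hK
      _ = 1 / (3 * τ) := by ring
      _ ≤ 1 - q := h1
  have hB : (1 - q)⁻¹ ≤ (K : ℝ) / 2 := by
    have h2Kpos : (0 : ℝ) < 2 / (K : ℝ) := by positivity
    calc (1 - q)⁻¹ ≤ (2 / (K : ℝ))⁻¹ := inv_anti₀ h2Kpos h2K
      _ = (K : ℝ) / 2 := by rw [inv_div]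
  -- q^N ≤ (K⁻¹)^4
  set L : ℝ := Real.logb 2 (K : ℝ) with hLdef
  have hL0 : 0 ≤ L := Real.logb_nonneg one_lt_two hK1
  have hNge : 4 * τ * L ≤ (N : ℝ) := by rw [hN]; exact Nat.le_ceil _
  have hC : q ^ N ≤ ((K : ℝ)⁻¹) ^ 4 := by
    have e1 : q ^ N = Real.exp ((N : ℝ) * (-1 / τ)) := by
      rw [hqdef, ← Real.exp_nat_mul]
    have e2 : (N : ℝ) * (-1 / τ) ≤ -(4 * L) := by
      have h2 : 4 * L ≤ (N : ℝ) / τ := by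
        rw [le_div_iff₀ hτ0]; nlinarith
      have h1 : (N : ℝ) * (-1 / τ) = -((N : ℝ) / τ) := by ring
      linarith [h1 ▸ neg_le_neg h2]
    have e3 : -(4 * L) ≤ -(4 * Real.log (K : ℝ)) := by
      have hlogK : 0 ≤ Real.log (K : ℝ) := Real.log_nonneg hK1
      have hlog2 : 0 < Real.log 2 := Real.log_pos one_lt_two
      have hlog2le : Real.log 2 ≤ 1 := by
        have := Real.log_two_lt_d9; linarith
      have : Real.log (K : ℝ) ≤ L := by
        rw [hLdef, Real.logb, le_div_iff₀ hlog2]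
        nlinarith
      linarith
    have e4 : Real.exp (-(4 * Real.log (K : ℝ))) = ((K : ℝ)⁻¹) ^ 4 := by
      rw [Real.exp_neg]
      have : Real.exp (4 * Real.log (K : ℝ)) = (K : ℝ) ^ 4 := by
        rw [show (4 : ℝ) * Real.log (K : ℝ) = ((4 : ℕ) : ℝ) * Real.log (K : ℝ) by norm_num,
          Real.exp_nat_mul, Real.exp_log hKpos]
      rw [this, inv_pow]
    calc q ^ N = Real.exp ((N : ℝ) * (-1 / τ)) := e1
      _ ≤ Real.exp (-(4 * L)) := Real.exp_le_exp.mpr e2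
      _ ≤ Real.exp (-(4 * Real.log (K : ℝ))) := Real.exp_le_exp.mpr e3
      _ = ((K : ℝ)⁻¹) ^ 4 := e4
  -- combine
  have hfin : 2 * q ^ N * (1 - q)⁻¹ ≤ 2 * ((K : ℝ)⁻¹) ^ 4 * ((K : ℝ) / 2) := by
    apply mul_le_mul (by nlinarith [pow_nonneg hq0.le N]) hB
      (inv_nonneg.mpr (by linarith)) (by positivity)
  calc 2 * q ^ N * (1 - q)⁻¹ ≤ 2 * ((K : ℝ)⁻¹) ^ 4 * ((K : ℝ) / 2) := hfin
    _ = 1 / (K : ℝ) ^ 3 := by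
        field_simp
/-- Difference of average-reward value functions of two policies of a
uniformly fast-mixing MDP is controlled by the maximal per-state ℓ1-distance
between the policies. -/
theorem stmt11 (X A : Type*) [Fintype X] [DecidableEq X] [Fintype A]
    [Nonempty X] [Nonempty A]
    -- transition kernel
    (P : X → A → X → ℝ)
    (hPnn : ∀ x a x', 0 ≤ P x a x') (hPsum : ∀ x a, ∑ x', P x a x' = 1)
    -- reward in [0,1]
    (r : X → A → ℝ) (hr0 : ∀ x a, 0 ≤ r x a) (hr1 : ∀ x a, r x a ≤ 1)
    -- policies π and π'
    (π π' : X → A → ℝ)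
    (hπnn : ∀ x a, 0 ≤ π x a) (hπsum : ∀ x, ∑ a, π x a = 1)
    (hπ'nn : ∀ x a, 0 ≤ π' x a) (hπ'sum : ∀ x, ∑ a, π' x a = 1)
    -- induced transition matrices and rewards
    (Pπ Pπ' : Matrix X X ℝ)
    (hPπ : ∀ x x', Pπ x x' = ∑ a, π x a * P x a x')
    (hPπ' : ∀ x x', Pπ' x x' = ∑ a, π' x a * P x a x')
    (rπ rπ' : X → ℝ)
    (hrπ : ∀ x, rπ x = ∑ a, π x a * r x a)
    (hrπ' : ∀ x, rπ' x = ∑ a, π' x a * r x a)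
    -- contraction condition with parameter τ for both chains
    (τ : ℝ) (hτ : 1 ≤ τ)
    (hcontr : ∀ μ μ' : X → ℝ, (∀ x, 0 ≤ μ x) → (∑ x, μ x = 1) →
      (∀ x, 0 ≤ μ' x) → (∑ x, μ' x = 1) →
      ∑ x', |∑ x, (μ x - μ' x) * Pπ x x'| ≤ Real.exp (-1 / τ) * ∑ x, |μ x - μ' x|)
    (hcontr' : ∀ μ μ' : X → ℝ, (∀ x, 0 ≤ μ x) → (∑ x, μ x = 1) →
      (∀ x, 0 ≤ μ' x) → (∑ x, μ' x = 1) →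
      ∑ x', |∑ x, (μ x - μ' x) * Pπ' x x'| ≤ Real.exp (-1 / τ) * ∑ x, |μ x - μ' x|)
    -- stationary distributions and average rewards
    (μπ μπ' : X → ℝ)
    (hμnn : ∀ x, 0 ≤ μπ x) (hμsum : ∑ x, μπ x = 1)
    (hstat : ∀ x', ∑ x, μπ x * Pπ x x' = μπ x')
    (hμ'nn : ∀ x, 0 ≤ μπ' x) (hμ'sum : ∑ x, μπ' x = 1)
    (hstat' : ∀ x', ∑ x, μπ' x * Pπ' x x' = μπ' x')
    (lam lam' : ℝ)
    (hlam : lam = ∑ x, μπ x * rπ x) (hlam' : lam' = ∑ x, μπ' x * rπ' x)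
    -- value functions
    (V V' : X → ℝ)
    (hV : ∀ x, V x = ∑' t : ℕ, ((Pπ ^ t).mulVec rπ x - lam))
    (hV' : ∀ x, V' x = ∑' t : ℕ, ((Pπ' ^ t).mulVec rπ' x - lam'))
    -- truncation horizon and policy distance
    (K : ℕ) (hK : 6 * τ ≤ (K : ℝ))
    (N : ℕ) (hN : N = ⌈4 * τ * Real.logb 2 (K : ℝ)⌉₊)
    (Δ : ℝ)
    (hΔ : Δ = Finset.univ.sup' Finset.univ_nonempty
      (fun x : X => ∑ a, |π x a - π' x a|)) :
    ∀ x : X, |V x - V' x|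
      ≤ ((N : ℝ) ^ 2 + (N : ℝ)) * Δ + (N : ℝ) * |lam - lam'| + 2 / (K : ℝ) ^ 3 := by
  intro x
  have hτ0 : (0 : ℝ) < τ := by linarith
  set q : ℝ := Real.exp (-1 / τ) with hqdef
  have hq0 : 0 < q := Real.exp_pos _
  have hq1 : q < 1 := by
    rw [hqdef, Real.exp_lt_one_iff, neg_div]
    have : 0 < 1 / τ := by positivity
    linarith
  -- stochasticity of induced matrices
  have hPπ0 : ∀ y x', 0 ≤ Pπ y x' := fun y x' => by
    rw [hPπ]; exact Finset.sum_nonneg fun a _ => mul_nonneg (hπnn y a) (hPnn y a x')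
  have hPπ'0 : ∀ y x', 0 ≤ Pπ' y x' := fun y x' => by
    rw [hPπ']; exact Finset.sum_nonneg fun a _ => mul_nonneg (hπ'nn y a) (hPnn y a x')
  have hPπ1 : ∀ y, ∑ x', Pπ y x' = 1 := by
    intro y
    simp only [hPπ]
    rw [Finset.sum_comm]
    calc ∑ a, ∑ x', π y a * P y a x' = ∑ a, π y a * ∑ x', P y a x' := by
          simp [Finset.mul_sum]
      _ = 1 := by simp [hPsum, hπsum]
  have hPπ'1 : ∀ y, ∑ x', Pπ' y x' = 1 := by
    intro y
    simp only [hPπ']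
    rw [Finset.sum_comm]
    calc ∑ a, ∑ x', π' y a * P y a x' = ∑ a, π' y a * ∑ x', P y a x' := by
          simp [Finset.mul_sum]
      _ = 1 := by simp [hPsum, hπ'sum]
  -- reward bounds
  have hrπ0 : ∀ y, 0 ≤ rπ y := fun y => by
    rw [hrπ]; exact Finset.sum_nonneg fun a _ => mul_nonneg (hπnn y a) (hr0 y a)
  have hrπ'0 : ∀ y, 0 ≤ rπ' y := fun y => by
    rw [hrπ']; exact Finset.sum_nonneg fun a _ => mul_nonneg (hπ'nn y a) (hr0 y a)
  have hrπ1 : ∀ y, rπ y ≤ 1 := by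
    intro y
    rw [hrπ]
    calc ∑ a, π y a * r y a ≤ ∑ a, π y a * 1 :=
          Finset.sum_le_sum fun a _ => mul_le_mul_of_nonneg_left (hr1 y a) (hπnn y a)
      _ = 1 := by simp [hπsum]
  have hrπ'1 : ∀ y, rπ' y ≤ 1 := by
    intro y
    rw [hrπ']
    calc ∑ a, π' y a * r y a ≤ ∑ a, π' y a * 1 :=
          Finset.sum_le_sum fun a _ => mul_le_mul_of_nonneg_left (hr1 y a) (hπ'nn y a)
      _ = 1 := by simp [hπ'sum]
  -- Δ facts
  have hΔx : ∀ y, ∑ a, |π y a - π' y a| ≤ Δ := fun y =>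
    hΔ ▸ Finset.le_sup' (fun x : X => ∑ a, |π x a - π' x a|) (Finset.mem_univ y)
  have hΔ0 : 0 ≤ Δ :=
    le_trans (Finset.sum_nonneg fun a _ => abs_nonneg _) (hΔx x)
  -- row ℓ1-difference bound
  have hrow : ∀ y, ∑ x', |Pπ y x' - Pπ' y x'| ≤ Δ := by
    intro y
    calc ∑ x', |Pπ y x' - Pπ' y x'|
        = ∑ x', |∑ a, (π y a - π' y a) * P y a x'| := by
          congr 1; ext x'
          rw [hPπ, hPπ', ← Finset.sum_sub_distrib]
          congr 1
          exact Finset.sum_congr rfl fun a _ => by ring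
      _ ≤ ∑ x', ∑ a, |π y a - π' y a| * P y a x' := by
          refine Finset.sum_le_sum fun x' _ => ?_
          calc |∑ a, (π y a - π' y a) * P y a x'|
              ≤ ∑ a, |(π y a - π' y a) * P y a x'| := Finset.abs_sum_le_sum_abs _ _
            _ = ∑ a, |π y a - π' y a| * P y a x' := by
                congr 1; ext a; rw [abs_mul, abs_of_nonneg (hPnn y a x')]
      _ = ∑ a, |π y a - π' y a| * ∑ x', P y a x' := by
          rw [Finset.sum_comm]; simp [Finset.mul_sum]
      _ = ∑ a, |π y a - π' y a| := by simp [hPsum]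
      _ ≤ Δ := hΔx y
  -- reward difference bound
  have hvd : ∀ y, |rπ y - rπ' y| ≤ Δ := by
    intro y
    rw [hrπ, hrπ', ← Finset.sum_sub_distrib]
    calc |∑ a, (π y a * r y a - π' y a * r y a)|
        ≤ ∑ a, |π y a * r y a - π' y a * r y a| := Finset.abs_sum_le_sum_abs _ _
      _ ≤ ∑ a, |π y a - π' y a| := by
          refine Finset.sum_le_sum fun a _ => ?_
          have e : π y a * r y a - π' y a * r y a = (π y a - π' y a) * r y a := by ring
          rw [e, abs_mul]
          have : |r y a| ≤ 1 := abs_le.mpr ⟨by linarith [hr0 y a], hr1 y a⟩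
          calc |π y a - π' y a| * |r y a| ≤ |π y a - π' y a| * 1 :=
                mul_le_mul_of_nonneg_left this (abs_nonneg _)
            _ = _ := mul_one _
      _ ≤ Δ := hΔx y
  -- per-step head bound
  have hhead := val_diff Pπ Pπ' hPπ0 hPπ1 hPπ'0 hPπ'1 rπ rπ' hrπ0 hrπ1 hrπ'0 hrπ'1
    Δ hrow hvd
  -- mixing bounds
  have hmix : ∀ (t : ℕ) (y : X), |(Pπ ^ t).mulVec rπ y - lam| ≤ 2 * q ^ t :=
    fun t y => mix_abs Pπ hPπ0 hPπ1 q hq0.le hcontr μπ hμnn hμsum hstat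
      rπ hrπ0 hrπ1 lam hlam t y
  have hmix' : ∀ (t : ℕ) (y : X), |(Pπ' ^ t).mulVec rπ' y - lam'| ≤ 2 * q ^ t :=
    fun t y => mix_abs Pπ' hPπ'0 hPπ'1 q hq0.le hcontr' μπ' hμ'nn hμ'sum hstat'
      rπ' hrπ'0 hrπ'1 lam' hlam' t y
  -- summability and tail bounds
  obtain ⟨hsum, htail⟩ := tsum_tail_bound (fun t => (Pπ ^ t).mulVec rπ x - lam)
    q 2 hq0.le hq1 (by norm_num) (fun t => hmix t x) N
  obtain ⟨hsum', htail'⟩ := tsum_tail_bound (fun t => (Pπ' ^ t).mulVec rπ' x - lam')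
    q 2 hq0.le hq1 (by norm_num) (fun t => hmix' t x) N
  have hnum := numer_bound τ hτ K N hK hN
  -- split the series
  rw [hV, hV', ← Summable.sum_add_tsum_nat_add N hsum, ← Summable.sum_add_tsum_nat_add N hsum']
  set S : ℝ := ∑ t ∈ Finset.range N, ((Pπ ^ t).mulVec rπ x - lam) with hS
  set S' : ℝ := ∑ t ∈ Finset.range N, ((Pπ' ^ t).mulVec rπ' x - lam') with hS'
  set T : ℝ := ∑' t : ℕ, ((Pπ ^ (t + N)).mulVec rπ x - lam) with hT
  set T' : ℝ := ∑' t : ℕ, ((Pπ' ^ (t + N)).mulVec rπ' x - lam') with hT'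
  -- head difference bound
  have hSdiff : |S - S'| ≤ (N : ℝ) ^ 2 * Δ + (N : ℝ) * |lam - lam'| := by
    have e : S - S' = ∑ t ∈ Finset.range N,
        (((Pπ ^ t).mulVec rπ x - lam) - ((Pπ' ^ t).mulVec rπ' x - lam')) := by
      rw [hS, hS', ← Finset.sum_sub_distrib]
    rw [e]
    calc |∑ t ∈ Finset.range N,
          (((Pπ ^ t).mulVec rπ x - lam) - ((Pπ' ^ t).mulVec rπ' x - lam'))|
        ≤ ∑ t ∈ Finset.range N,
          |((Pπ ^ t).mulVec rπ x - lam) - ((Pπ' ^ t).mulVec rπ' x - lam')| :=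
          Finset.abs_sum_le_sum_abs _ _
      _ ≤ ∑ _t ∈ Finset.range N, ((N : ℝ) * Δ + |lam - lam'|) := by
          refine Finset.sum_le_sum fun t ht => ?_
          have h1 := hhead t x
          have ht' : (t : ℝ) + 1 ≤ (N : ℝ) := by
            exact_mod_cast Nat.succ_le_of_lt (Finset.mem_range.mp ht)
          have h2 : ((t : ℝ) + 1) * Δ ≤ (N : ℝ) * Δ :=
            mul_le_mul_of_nonneg_right ht' hΔ0
          have e2 : ((Pπ ^ t).mulVec rπ x - lam) - ((Pπ' ^ t).mulVec rπ' x - lam')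
              = ((Pπ ^ t).mulVec rπ x - (Pπ' ^ t).mulVec rπ' x) - (lam - lam') := by
            ring
          rw [e2]
          calc |((Pπ ^ t).mulVec rπ x - (Pπ' ^ t).mulVec rπ' x) - (lam - lam')|
              ≤ |(Pπ ^ t).mulVec rπ x - (Pπ' ^ t).mulVec rπ' x| + |lam - lam'| :=
                abs_sub _ _
            _ ≤ (N : ℝ) * Δ + |lam - lam'| := add_le_add (le_trans h1 h2) le_rfl
      _ = (N : ℝ) * ((N : ℝ) * Δ + |lam - lam'|) := by
          rw [Finset.sum_const, Finset.card_range, nsmul_eq_mul]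
      _ = (N : ℝ) ^ 2 * Δ + (N : ℝ) * |lam - lam'| := by ring
  -- put things together
  have hfinal : |S + T - (S' + T')| ≤ |S - S'| + |T| + |T'| := by
    have e : S + T - (S' + T') = (S - S') + (T - T') := by ring
    rw [e]
    calc |(S - S') + (T - T')| ≤ |S - S'| + |T - T'| := abs_add_le _ _
      _ ≤ |S - S'| + (|T| + |T'|) := by
          exact add_le_add le_rfl (abs_sub _ _)
      _ = |S - S'| + |T| + |T'| := by ring
  have hNΔ : 0 ≤ (N : ℝ) * Δ := mul_nonneg (Nat.cast_nonneg N) hΔ0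
  calc |S + T - (S' + T')| ≤ |S - S'| + |T| + |T'| := hfinal
    _ ≤ ((N : ℝ) ^ 2 * Δ + (N : ℝ) * |lam - lam'|)
        + (2 * q ^ N * (1 - q)⁻¹) + (2 * q ^ N * (1 - q)⁻¹) := by
        exact add_le_add (add_le_add hSdiff htail) htail'
    _ ≤ ((N : ℝ) ^ 2 + (N : ℝ)) * Δ + (N : ℝ) * |lam - lam'| + 2 / (K : ℝ) ^ 3 := by
        have h1 : 2 * q ^ N * (1 - q)⁻¹ ≤ 1 / (K : ℝ) ^ 3 := hnum
        have hx : ((N : ℝ) ^ 2 + (N : ℝ)) * Δ = (N : ℝ) ^ 2 * Δ + (N : ℝ) * Δ := by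
          ring
        have hy : 2 / (K : ℝ) ^ 3 = 1 / (K : ℝ) ^ 3 + 1 / (K : ℝ) ^ 3 := by ring
        linarith
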